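/- For k ≥ 2, the first homology group of the unordered configuration space of k points in the 2-sphere is cyclic of order 2k−2: H_1(C_k(S²); ℤ) ≅ ℤ/(2k−2)ℤ. Equivalently, the abelianization of the sphere braid group π_1(C_k(S²)) is ℤ/(2k−2). -/

import Mathlib

/-- The standard braid relations on `n` generators `σ_0, …, σ_{n-1}`. -/
def braidRels (n : ℕ) : Set (FreeGroup (Fin n)) :=
  {r | (∃ i j : Fin n, (i : ℕ) + 1 = (j : ℕ) ∧
          r = FreeGroup.of i * FreeGroup.of j * FreeGroup.of i *
              (FreeGroup.of j * FreeGroup.of i * FreeGroup.of j)⁻¹) ∨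
       (∃ i j : Fin n, (j : ℕ) + 2 ≤ (i : ℕ) ∧
          r = FreeGroup.of i * FreeGroup.of j * (FreeGroup.of j * FreeGroup.of i)⁻¹)}

/-- The Fadell–Van Buskirk sphere relation
`σ_0 σ_1 ⋯ σ_{n-1} · σ_{n-1} ⋯ σ_1 σ_0` on `n` generators. -/
def sphereRel (n : ℕ) : FreeGroup (Fin n) :=
  (List.ofFn (fun i : Fin n => FreeGroup.of i)).prod *
    ((List.ofFn (fun i : Fin n => FreeGroup.of i)).reverse).prod

section Aux

variable {n : ℕ}

abbrev sbRels (n : ℕ) : Set (FreeGroup (Fin n)) := braidRels n ∪ {sphereRel n}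

/-- image of generator i in the abelianization -/
def agen (n : ℕ) (i : Fin n) : Abelianization (PresentedGroup (sbRels n)) :=
  Abelianization.of (PresentedGroup.of i)

lemma rel_one {r : FreeGroup (Fin n)} (h : r ∈ sbRels n) :
    PresentedGroup.mk (sbRels n) r = 1 := by
  have : r ∈ Subgroup.normalClosure (sbRels n) := Subgroup.subset_normalClosure h
  exact (QuotientGroup.eq_one_iff r).mpr this

lemma agen_succ (i j : Fin n) (hij : (i : ℕ) + 1 = (j : ℕ)) : agen n i = agen n j := by
  have hr : PresentedGroup.mk (sbRels n)
      (FreeGroup.of i * FreeGroup.of j * FreeGroup.of i *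
        (FreeGroup.of j * FreeGroup.of i * FreeGroup.of j)⁻¹) = 1 :=
    rel_one (Or.inl (Or.inl ⟨i, j, hij, rfl⟩))
  have h2 : (PresentedGroup.of i : PresentedGroup (sbRels n)) * PresentedGroup.of j *
      PresentedGroup.of i = PresentedGroup.of j * PresentedGroup.of i * PresentedGroup.of j := by
    have := hr
    simp only [map_mul, map_inv] at this
    exact mul_inv_eq_one.mp this
  have h3 : agen n i * agen n j * agen n i = agen n j * agen n i * agen n j := by
    unfold agen
    rw [← map_mul, ← map_mul, ← map_mul, ← map_mul, h2]
  set a := agen n i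
  set b := agen n j
  have h4 : a * (a * b) = b * (a * b) := by
    calc a * (a * b) = a * (b * a) := by rw [mul_comm a b]
    _ = b * (a * b) := by rw [← mul_assoc, ← mul_assoc, h3]
  exact mul_right_cancel h4

lemma agen_const (hn : 0 < n) (i : Fin n) : agen n i = agen n ⟨0, hn⟩ := by
  obtain ⟨v, hv⟩ := i
  induction v with
  | zero => rfl
  | succ m ih =>
    have hm : m < n := Nat.lt_of_succ_lt hv
    rw [← agen_succ ⟨m, hm⟩ ⟨m + 1, hv⟩ rfl, ih hm]

lemma agen_pow (hn : 0 < n) : (agen n ⟨0, hn⟩) ^ (2 * n) = 1 := by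
  set F : FreeGroup (Fin n) →* Abelianization (PresentedGroup (sbRels n)) :=
    Abelianization.of.comp (PresentedGroup.mk (sbRels n)) with hF
  have hr : F (sphereRel n) = 1 := by
    show Abelianization.of (PresentedGroup.mk (sbRels n) (sphereRel n)) = 1
    rw [rel_one (Or.inr rfl), map_one]
  rw [sphereRel, map_mul, map_list_prod, map_list_prod, List.map_reverse,
    List.map_ofFn] at hr
  have hfn : (⇑F ∘ fun i : Fin n => FreeGroup.of i) = fun _ : Fin n => agen n ⟨0, hn⟩ := by
    funext i
    exact agen_const hn i
  rw [hfn, List.ofFn_const, List.reverse_replicate, List.prod_replicate, ← pow_add] at hr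
  rw [two_mul]
  exact hr

end Aux

/-- For `k ≥ 2`, the abelianization of the sphere braid group
`π_1(C_k(S²))`, presented by the braid relations together with the sphere relation,
is cyclic of order `2k - 2`. -/
theorem stmt12 (k : ℕ) (hk : 2 ≤ k) :
    Nonempty
      (Abelianization (PresentedGroup (braidRels (k - 1) ∪ {sphereRel (k - 1)}))
        ≃* Multiplicative (ZMod (2 * k - 2))) := by
  set n := k - 1 with hn'
  have hn : 0 < n := by omega
  have hm : 2 * k - 2 = 2 * n := by omega
  rw [hm]
  set m := 2 * n with hmdef
  -- target group
  set T := Multiplicative (ZMod m) with hT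
  -- forward map
  have hrels : ∀ r ∈ sbRels n,
      FreeGroup.lift (fun _ : Fin n => (Multiplicative.ofAdd (1 : ZMod m))) r = 1 := by
    intro r hr
    rcases hr with (⟨i, j, _, rfl⟩ | ⟨i, j, _, rfl⟩) | hr
    · simp only [map_mul, map_inv, FreeGroup.lift_apply_of]; group
    · simp only [map_mul, map_inv, FreeGroup.lift_apply_of]; group
    · rw [Set.mem_singleton_iff] at hr
      subst hr
      rw [sphereRel, map_mul, map_list_prod, map_list_prod, List.map_reverse,
        List.map_ofFn]
      simp only [Function.comp_def, FreeGroup.lift_apply_of]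
      rw [List.ofFn_const, List.reverse_replicate, List.prod_replicate, ← pow_add, ← two_mul]
      have : ((Multiplicative.ofAdd (1 : ZMod m)) ^ m) = 1 := by
        rw [← ofAdd_nsmul, nsmul_eq_mul, mul_one]
        rw [ZMod.natCast_self]
        rfl
      rw [← hmdef, this]
  set φ0 : PresentedGroup (sbRels n) →* T := PresentedGroup.toGroup hrels with hφ0
  set φ : Abelianization (PresentedGroup (sbRels n)) →* T := Abelianization.lift φ0 with hφ
  -- backward map
  set a0 : Abelianization (PresentedGroup (sbRels n)) := agen n ⟨0, hn⟩ with ha0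
  have hpow : ((zmultiplesHom _ (Additive.ofMul a0)) (m : ℤ)) = 0 := by
    show (m : ℤ) • Additive.ofMul a0 = 0
    rw [← ofMul_zpow]
    rw [zpow_natCast, agen_pow hn]
    rfl
  set ψ0 : ZMod m →+ Additive (Abelianization (PresentedGroup (sbRels n))) :=
    ZMod.lift m ⟨zmultiplesHom _ (Additive.ofMul a0), hpow⟩ with hψ0
  set ψ : T →* Abelianization (PresentedGroup (sbRels n)) :=
    (MulEquiv.multiplicativeAdditive _).toMonoidHom.comp ψ0.toMultiplicative with hψ
  have hψ1 : ∀ y : ℤ, ψ (Multiplicative.ofAdd ((y : ZMod m))) = a0 ^ y := by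
    intro y
    show Additive.toMul (ψ0 ((y : ZMod m))) = a0 ^ y
    rw [hψ0, ZMod.lift_coe]
    show Additive.toMul (y • Additive.ofMul a0) = a0 ^ y
    rw [← ofMul_zpow]
    rfl
  have hφa : ∀ i : Fin n, φ (agen n i) = Multiplicative.ofAdd (1 : ZMod m) := by
    intro i
    show φ (Abelianization.of (PresentedGroup.of i)) = _
    rw [hφ, Abelianization.lift_apply_of]
    exact PresentedGroup.toGroup.of hrels
  refine ⟨MonoidHom.toMulEquiv φ ψ ?_ ?_⟩
  · -- ψ ∘ φ = id
    apply Abelianization.hom_ext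
    apply PresentedGroup.ext
    intro x
    show ψ (φ (agen n x)) = agen n x
    rw [hφa x, agen_const hn x]
    have : (Multiplicative.ofAdd (1 : ZMod m)) = Multiplicative.ofAdd (((1 : ℤ) : ZMod m)) := by
      norm_num
    rw [this, hψ1 1, zpow_one]
  · -- φ ∘ ψ = id
    apply MonoidHom.ext
    intro x
    obtain ⟨y, rfl⟩ : ∃ y : ℤ, Multiplicative.ofAdd ((y : ZMod m)) = x := by
      obtain ⟨y, hy⟩ := ZMod.intCast_surjective (n := m) (Multiplicative.toAdd x)
      exact ⟨y, by rw [hy]; rfl⟩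
    show φ (ψ _) = _
    rw [hψ1 y, map_zpow, hφa ⟨0, hn⟩, ← ofAdd_zsmul]
    norm_num
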